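/- Assume n ≥ 19 and τ ∈ ℝ. Then for every ε > 0: ∫_0^∞ ε^{n−2} (ε² + r²)^{2−n} r^{n+1} [ (n+2) f(r²)² + 4 r² f(r²) f′(r²) + 2 r⁴ f′(r²)² ] dr = I(ε²) · ∫_0^∞ (1 + r²)^{2−n} r^{n+7} dr, where I(s) = ((n−12)/(n+6))·((n−10)/(n+4))·(n−8)·τ² s² + 10·((n−12)/(n+6))·(n−10)·τ s³ + ( 25·((n−12)/(n+6))·(n+8) − 2(n−12)τ ) s⁴ + ( ((n+8)/10)·τ − 10(n+12) ) s⁵ + ((n+8)/(n−14))·((3n+52)/2) s⁶ − ((n+8)/(n−14))·((n+10)/(n−16))·((n+24)/10) s⁷ + ((n+8)/(n−14))·((n+10)/(n−16))·((n+12)/(n−18))·((n+32)/400) s⁸. -/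

import Mathlib

open scoped BigOperators
open MeasureTheory

/-- The cut-off profile `f(s) = τ + 5s − s² + s³/20`. -/
noncomputable def fpoly (τ s : ℝ) : ℝ := τ + 5 * s - s ^ 2 + s ^ 3 / 20

/-- The polynomial `I(s)` from Proposition 10 of the paper. -/
noncomputable def Ipoly (n : ℕ) (τ s : ℝ) : ℝ :=
  ((n : ℝ) - 12) / ((n : ℝ) + 6) * (((n : ℝ) - 10) / ((n : ℝ) + 4)) * ((n : ℝ) - 8) * τ ^ 2 * s ^ 2
    + 10 * (((n : ℝ) - 12) / ((n : ℝ) + 6)) * ((n : ℝ) - 10) * τ * s ^ 3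
    + (25 * (((n : ℝ) - 12) / ((n : ℝ) + 6)) * ((n : ℝ) + 8) - 2 * ((n : ℝ) - 12) * τ) * s ^ 4
    + ((((n : ℝ) + 8) / 10) * τ - 10 * ((n : ℝ) + 12)) * s ^ 5
    + (((n : ℝ) + 8) / ((n : ℝ) - 14)) * ((3 * (n : ℝ) + 52) / 2) * s ^ 6
    - (((n : ℝ) + 8) / ((n : ℝ) - 14)) * (((n : ℝ) + 10) / ((n : ℝ) - 16)) *
        (((n : ℝ) + 24) / 10) * s ^ 7
    + (((n : ℝ) + 8) / ((n : ℝ) - 14)) * (((n : ℝ) + 10) / ((n : ℝ) - 16)) *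
        (((n : ℝ) + 12) / ((n : ℝ) - 18)) * (((n : ℝ) + 32) / 400) * s ^ 8

open MeasureTheory Set Filter

lemma fpoly_deriv' (τ s : ℝ) :
    HasDerivAt (fun x : ℝ => τ + 5 * x - x ^ 2 + x ^ 3 / 20) (5 - 2 * s + 3 * s ^ 2 / 20) s := by
  have h : HasDerivAt (fun x : ℝ => τ + 5 * x - x ^ 2 + x ^ 3 / 20)
      (0 + 5 * 1 - ((2 : ℕ) * s ^ (2 - 1)) + ((3 : ℕ) * s ^ (3 - 1)) / 20) s :=
    (((hasDerivAt_const s τ).add ((hasDerivAt_id s).const_mul 5)).sub (hasDerivAt_pow 2 s)).add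
      ((hasDerivAt_pow 3 s).div_const 20)
  convert h using 1
  push_cast; ring

lemma integ_aux (n m : ℕ) (hn : 19 ≤ n) (hm : m ≤ n + 13) :
    IntegrableOn (fun r : ℝ => (1 + r ^ 2) ^ ((2 : ℝ) - n) * r ^ m) (Set.Ioi 0) := by
  have hn' : (19 : ℝ) ≤ (n : ℝ) := by exact_mod_cast hn
  have hm' : (m : ℝ) ≤ (n : ℝ) + 13 := by exact_mod_cast hm
  have hcont : Continuous (fun r : ℝ => (1 + r ^ 2) ^ ((2 : ℝ) - n) * r ^ m) := by
    apply Continuous.mul ?_ (continuous_pow m)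
    exact (continuous_const.add (continuous_pow 2)).rpow_const
      (fun x => Or.inl (by simp only [Pi.add_apply]; positivity))
  refine (integrable_inv_one_add_sq.restrict (s := Set.Ioi 0)).mono'
    hcont.aestronglyMeasurable ?_
  filter_upwards [ae_restrict_mem measurableSet_Ioi] with r hr
  have hr0 : (0 : ℝ) < r := hr
  have hb : (0 : ℝ) < 1 + r ^ 2 := by positivity
  have h1 : r ^ m ≤ (1 + r ^ 2) ^ ((m : ℝ) / 2) := by
    have e1 : (r : ℝ) ^ m = (r ^ 2) ^ ((m : ℝ) / 2) := by
      have e2 : ((r : ℝ) ^ 2) ^ ((m : ℝ) / 2) = r ^ ((2 : ℝ) * ((m : ℝ) / 2)) := by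
        rw [← Real.rpow_natCast r 2, ← Real.rpow_mul hr0.le]; norm_num
      rw [e2, show (2 : ℝ) * ((m : ℝ) / 2) = (m : ℝ) by ring, Real.rpow_natCast]
    rw [e1]
    exact Real.rpow_le_rpow (by positivity) (by nlinarith) (by positivity)
  have key : (1 + r ^ 2) ^ ((2 : ℝ) - n) * r ^ m ≤ (1 + r ^ 2)⁻¹ := by
    calc (1 + r ^ 2) ^ ((2 : ℝ) - n) * r ^ m
        ≤ (1 + r ^ 2) ^ ((2 : ℝ) - n) * (1 + r ^ 2) ^ ((m : ℝ) / 2) :=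
          mul_le_mul_of_nonneg_left h1 (Real.rpow_nonneg hb.le _)
      _ = (1 + r ^ 2) ^ ((2 : ℝ) - n + (m : ℝ) / 2) := (Real.rpow_add hb _ _).symm
      _ ≤ (1 + r ^ 2) ^ (-1 : ℝ) :=
          Real.rpow_le_rpow_of_exponent_le (by nlinarith) (by linarith)
      _ = (1 + r ^ 2)⁻¹ := Real.rpow_neg_one _
  have hnn : 0 ≤ (1 + r ^ 2) ^ ((2 : ℝ) - n) * r ^ m := by positivity
  rw [Real.norm_eq_abs, abs_of_nonneg hnn]
  exact key

lemma rec_aux (n j : ℕ) (hn : 19 ≤ n) (hj : j + 2 ≤ n + 13) :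
    (2 * (n : ℝ) - (j : ℝ) - 7) * ∫ r in Set.Ioi (0:ℝ), (1 + r ^ 2) ^ ((2:ℝ) - n) * r ^ (j + 2)
      = ((j : ℝ) + 1) * ∫ r in Set.Ioi (0:ℝ), (1 + r ^ 2) ^ ((2:ℝ) - n) * r ^ j := by
  have hn' : (19 : ℝ) ≤ (n : ℝ) := by exact_mod_cast hn
  have hj' : (j : ℝ) + 2 ≤ (n : ℝ) + 13 := by exact_mod_cast hj
  set F : ℝ → ℝ := fun r => r ^ (j + 1) * (1 + r ^ 2) ^ ((3:ℝ) - n) with hF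
  set φ : ℝ → ℝ := fun r => ((j : ℝ) + 1) * ((1 + r ^ 2) ^ ((2:ℝ) - n) * r ^ j)
      + (((j : ℝ) + 1) + 2 * ((3:ℝ) - n)) * ((1 + r ^ 2) ^ ((2:ℝ) - n) * r ^ (j + 2)) with hφ
  have hderiv : ∀ r : ℝ, r ∈ Set.Ici (0:ℝ) → HasDerivAt F (φ r) r := by
    intro r _
    have hb : (0:ℝ) < 1 + r ^ 2 := by positivity
    have h1 : HasDerivAt (fun r : ℝ => 1 + r ^ 2) (2 * r) r := by
      simpa using (hasDerivAt_pow 2 r).const_add 1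
    have h2 : HasDerivAt (fun r : ℝ => (1 + r ^ 2) ^ ((3:ℝ) - n))
        (2 * r * ((3:ℝ) - n) * (1 + r ^ 2) ^ ((3:ℝ) - n - 1)) r :=
      h1.rpow_const (Or.inl hb.ne')
    have h3 : HasDerivAt (fun r : ℝ => r ^ (j + 1) * (1 + r ^ 2) ^ ((3:ℝ) - n)) _ r :=
      (hasDerivAt_pow (j + 1) r).mul h2
    have e1 : (1 + r ^ 2) ^ ((3:ℝ) - n) = (1 + r ^ 2) ^ ((2:ℝ) - n) * (1 + r ^ 2) := by
      rw [show (3:ℝ) - n = ((2:ℝ) - n) + 1 by ring, Real.rpow_add hb, Real.rpow_one]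
    have e2 : (3:ℝ) - n - 1 = (2:ℝ) - n := by ring
    rw [e2] at h3
    convert h3 using 1
    simp only [Nat.add_sub_cancel]
    rw [e1]
    push_cast
    ring
  have hint : IntegrableOn φ (Set.Ioi (0:ℝ)) := by
    exact ((integ_aux n j hn (by omega)).const_mul _).add
      ((integ_aux n (j + 2) hn (by omega)).const_mul _)
  have htend : Filter.Tendsto F Filter.atTop (nhds 0) := by
    have hbig : Filter.Tendsto (fun r : ℝ => (1 + r ^ 2)) Filter.atTop Filter.atTop := by
      exact Filter.tendsto_atTop_add_const_left _ 1
        ((tendsto_pow_atTop (by norm_num)).comp Filter.tendsto_id)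
    set e : ℝ := ((j : ℝ) + 1) / 2 + 3 - n with he
    have hepos : 0 < -e := by rw [he]; push_cast at hj' ⊢; linarith
    have hh : Filter.Tendsto (fun r : ℝ => (1 + r ^ 2) ^ e) Filter.atTop (nhds 0) := by
      have := (tendsto_rpow_neg_atTop hepos).comp hbig
      simpa [neg_neg, Function.comp_def] using this
    apply squeeze_zero' ?_ ?_ hh
    · filter_upwards [Filter.eventually_ge_atTop (0:ℝ)] with r hr
      have : (0:ℝ) < 1 + r ^ 2 := by positivity
      positivity
    · filter_upwards [Filter.eventually_ge_atTop (0:ℝ)] with r hr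
      have hb : (0:ℝ) < 1 + r ^ 2 := by positivity
      have h1 : r ^ (j + 1) ≤ (1 + r ^ 2) ^ (((j:ℝ) + 1) / 2) := by
        have e2 : ((r : ℝ) ^ 2) ^ (((j:ℝ) + 1) / 2) = r ^ ((2 : ℝ) * (((j:ℝ) + 1) / 2)) := by
          rw [← Real.rpow_natCast r 2, ← Real.rpow_mul hr]; norm_num
        have e1 : (r : ℝ) ^ (j + 1) = (r ^ 2) ^ (((j:ℝ) + 1) / 2) := by
          rw [e2, show (2 : ℝ) * (((j:ℝ) + 1) / 2) = ((j:ℝ) + 1) by ring,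
            show ((j:ℝ) + 1) = ((j + 1 : ℕ) : ℝ) by push_cast; ring, Real.rpow_natCast]
        rw [e1]
        exact Real.rpow_le_rpow (by positivity) (by nlinarith) (by positivity)
      calc F r ≤ (1 + r ^ 2) ^ (((j:ℝ) + 1) / 2) * (1 + r ^ 2) ^ ((3:ℝ) - n) :=
            mul_le_mul_of_nonneg_right h1 (Real.rpow_nonneg hb.le _)
        _ = (1 + r ^ 2) ^ e := by rw [← Real.rpow_add hb, he]; ring_nf
  have hFTC := integral_Ioi_of_hasDerivAt_of_tendsto' hderiv hint htend
  have hF0 : F 0 = 0 := by simp [hF]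
  rw [hF0, sub_zero] at hFTC
  have hsplit : ∫ r in Set.Ioi (0:ℝ), φ r
      = ((j : ℝ) + 1) * (∫ r in Set.Ioi (0:ℝ), (1 + r ^ 2) ^ ((2:ℝ) - n) * r ^ j)
        + (((j : ℝ) + 1) + 2 * ((3:ℝ) - n)) *
          (∫ r in Set.Ioi (0:ℝ), (1 + r ^ 2) ^ ((2:ℝ) - n) * r ^ (j + 2)) := by
    rw [hφ]
    rw [integral_add ((integ_aux n j hn (by omega)).const_mul _)
      ((integ_aux n (j + 2) hn (by omega)).const_mul _),
      integral_const_mul, integral_const_mul]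
  rw [hsplit] at hFTC
  linarith [hFTC]

lemma fpoly_deriv (τ s : ℝ) : deriv (fpoly τ) s = 5 - 2 * s + 3 * s ^ 2 / 20 := by
  have h := fpoly_deriv' τ s
  exact h.deriv

lemma cv {ε : ℝ} (hε : 0 < ε) (G : ℝ → ℝ) :
    (∫ r in Set.Ioi (0:ℝ), G r) = ∫ u in Set.Ioi (0:ℝ), ε * G (ε * u) := by
  rw [integral_const_mul, integral_comp_mul_left_Ioi G 0 hε, mul_zero, smul_eq_mul,
    ← mul_assoc, mul_inv_cancel₀ hε.ne', one_mul]

set_option maxHeartbeats 2000000 in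
theorem stmt_11 (n : ℕ) (hn : 19 ≤ n) (τ : ℝ) (ε : ℝ) (hε : 0 < ε) :
    ∫ r in Set.Ioi (0 : ℝ),
        ε ^ (n - 2) * (ε ^ 2 + r ^ 2) ^ ((2 : ℝ) - n) * r ^ (n + 1) *
          (((n : ℝ) + 2) * fpoly τ (r ^ 2) ^ 2
            + 4 * r ^ 2 * fpoly τ (r ^ 2) * deriv (fpoly τ) (r ^ 2)
            + 2 * r ^ 4 * (deriv (fpoly τ) (r ^ 2)) ^ 2)
      = Ipoly n τ (ε ^ 2) *
          ∫ r in Set.Ioi (0 : ℝ), (1 + r ^ 2) ^ ((2 : ℝ) - n) * r ^ (n + 7) := by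
  obtain ⟨p, rfl⟩ : ∃ p, n = 19 + p := ⟨n - 19, by omega⟩
  rw [show 19 + p - 2 = 17 + p from by omega, show 19 + p + 1 = 20 + p from by omega,
    show 19 + p + 7 = 26 + p from by omega]
  have hq : ((ε ^ 2 : ℝ)) ^ ((2 : ℝ) - ((19 + p : ℕ) : ℝ)) = ε ^ 4 / ε ^ (2 * (19 + p)) := by
    rw [Real.rpow_sub (by positivity), Real.rpow_natCast, ← pow_mul]
    congr 1
    rw [show (2 : ℝ) = ((2 : ℕ) : ℝ) by norm_num, Real.rpow_natCast]
    ring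
  have hne2 : (ε : ℝ) ^ (2 * (19 + p)) ≠ 0 := pow_ne_zero _ hε.ne'
  have step : (∫ r in Set.Ioi (0 : ℝ),
        ε ^ (17 + p) * (ε ^ 2 + r ^ 2) ^ ((2 : ℝ) - ((19 + p : ℕ) : ℝ)) * r ^ (20 + p) *
          ((((19 + p : ℕ) : ℝ) + 2) * fpoly τ (r ^ 2) ^ 2
            + 4 * r ^ 2 * fpoly τ (r ^ 2) * deriv (fpoly τ) (r ^ 2)
            + 2 * r ^ 4 * (deriv (fpoly τ) (r ^ 2)) ^ 2))
      = ∫ u in Set.Ioi (0 : ℝ),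
          (ε ^ 4 * (((p : ℝ) + 21) * τ ^ 2)) * ((1 + u ^ 2) ^ ((2 : ℝ) - ((19 + p : ℕ) : ℝ)) * u ^ (20 + p)) + ((ε ^ 6 * ((10 * (p : ℝ) + 230) * τ)) * ((1 + u ^ 2) ^ ((2 : ℝ) - ((19 + p : ℕ) : ℝ)) * u ^ (22 + p)) + ((ε ^ 8 * ((25 * (p : ℝ) + 675) - (2 * (p : ℝ) + 50) * τ)) * ((1 + u ^ 2) ^ ((2 : ℝ) - ((19 + p : ℕ) : ℝ)) * u ^ (24 + p)) + ((ε ^ 10 * (((p : ℝ) + 27) / 10 * τ - (10 * (p : ℝ) + 310))) * ((1 + u ^ 2) ^ ((2 : ℝ) - ((19 + p : ℕ) : ℝ)) * u ^ (26 + p)) + ((ε ^ 12 * ((3 * (p : ℝ) + 109) / 2)) * ((1 + u ^ 2) ^ ((2 : ℝ) - ((19 + p : ℕ) : ℝ)) * u ^ (28 + p)) + ((ε ^ 14 * (-((p : ℝ) + 43) / 10)) * ((1 + u ^ 2) ^ ((2 : ℝ) - ((19 + p : ℕ) : ℝ)) * u ^ (30 + p)) + (ε ^ 16 * (((p : ℝ)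 + 51) / 400)) * ((1 + u ^ 2) ^ ((2 : ℝ) - ((19 + p : ℕ) : ℝ)) * u ^ (32 + p))))))) := by
    rw [cv hε]
    apply setIntegral_congr_fun measurableSet_Ioi
    intro u hu
    simp only [fpoly_deriv, fpoly]
    rw [show ε ^ 2 + (ε * u) ^ 2 = ε ^ 2 * (1 + u ^ 2) from by ring,
      Real.mul_rpow (by positivity) (by positivity), hq]
    generalize ((1 + u ^ 2 : ℝ)) ^ ((2 : ℝ) - ((19 + p : ℕ) : ℝ)) = P
    field_simp
    push_cast
    ring
  rw [step]
  have J0 := integ_aux (19 + p) (20 + p) (by omega) (by omega)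
  have J1 := integ_aux (19 + p) (22 + p) (by omega) (by omega)
  have J2 := integ_aux (19 + p) (24 + p) (by omega) (by omega)
  have J3 := integ_aux (19 + p) (26 + p) (by omega) (by omega)
  have J4 := integ_aux (19 + p) (28 + p) (by omega) (by omega)
  have J5 := integ_aux (19 + p) (30 + p) (by omega) (by omega)
  have J6 := integ_aux (19 + p) (32 + p) (by omega) (by omega)
  have K0 : IntegrableOn (fun u : ℝ => (ε ^ 4 * (((p : ℝ) + 21) * τ ^ 2)) * ((1 + u ^ 2) ^ ((2 : ℝ) - ((19 + p : ℕ) : ℝ)) * u ^ (20 + p))) (Set.Ioi (0:ℝ)) :=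
    J0.const_mul _
  have K1 : IntegrableOn (fun u : ℝ => (ε ^ 6 * ((10 * (p : ℝ) + 230) * τ)) * ((1 + u ^ 2) ^ ((2 : ℝ) - ((19 + p : ℕ) : ℝ)) * u ^ (22 + p))) (Set.Ioi (0:ℝ)) :=
    J1.const_mul _
  have K2 : IntegrableOn (fun u : ℝ => (ε ^ 8 * ((25 * (p : ℝ) + 675) - (2 * (p : ℝ) + 50) * τ)) * ((1 + u ^ 2) ^ ((2 : ℝ) - ((19 + p : ℕ) : ℝ)) * u ^ (24 + p))) (Set.Ioi (0:ℝ)) :=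
    J2.const_mul _
  have K3 : IntegrableOn (fun u : ℝ => (ε ^ 10 * (((p : ℝ) + 27) / 10 * τ - (10 * (p : ℝ) + 310))) * ((1 + u ^ 2) ^ ((2 : ℝ) - ((19 + p : ℕ) : ℝ)) * u ^ (26 + p))) (Set.Ioi (0:ℝ)) :=
    J3.const_mul _
  have K4 : IntegrableOn (fun u : ℝ => (ε ^ 12 * ((3 * (p : ℝ) + 109) / 2)) * ((1 + u ^ 2) ^ ((2 : ℝ) - ((19 + p : ℕ) : ℝ)) * u ^ (28 + p))) (Set.Ioi (0:ℝ)) :=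
    J4.const_mul _
  have K5 : IntegrableOn (fun u : ℝ => (ε ^ 14 * (-((p : ℝ) + 43) / 10)) * ((1 + u ^ 2) ^ ((2 : ℝ) - ((19 + p : ℕ) : ℝ)) * u ^ (30 + p))) (Set.Ioi (0:ℝ)) :=
    J5.const_mul _
  have K6 : IntegrableOn (fun u : ℝ => (ε ^ 16 * (((p : ℝ) + 51) / 400)) * ((1 + u ^ 2) ^ ((2 : ℝ) - ((19 + p : ℕ) : ℝ)) * u ^ (32 + p))) (Set.Ioi (0:ℝ)) :=
    J6.const_mul _
  have L5 : IntegrableOn (fun u : ℝ => ((ε ^ 14 * (-((p : ℝ) + 43) / 10)) * ((1 + u ^ 2) ^ ((2 : ℝ) - ((19 + p : ℕ) : ℝ)) * u ^ (30 + p)) + (ε ^ 16 * (((p : ℝ) + 51) / 400)) * ((1 + u ^ 2) ^ ((2 : ℝ) - ((19 + p : ℕ) : ℝ)) * u ^ (32 + p)))) (Set.Ioi (0:ℝ)) :=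
    K5.add K6
  have L4 : IntegrableOn (fun u : ℝ => ((ε ^ 12 * ((3 * (p : ℝ) + 109) / 2)) * ((1 + u ^ 2) ^ ((2 : ℝ) - ((19 + p : ℕ) : ℝ)) * u ^ (28 + p)) + ((ε ^ 14 * (-((p : ℝ) + 43) / 10)) * ((1 + u ^ 2) ^ ((2 : ℝ) - ((19 + p : ℕ) : ℝ)) * u ^ (30 + p)) + (ε ^ 16 * (((p : ℝ) + 51) / 400)) * ((1 + u ^ 2) ^ ((2 : ℝ) - ((19 + p : ℕ) : ℝ)) * u ^ (32 + p))))) (Set.Ioi (0:ℝ)) :=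
    K4.add L5
  have L3 : IntegrableOn (fun u : ℝ => ((ε ^ 10 * (((p : ℝ) + 27) / 10 * τ - (10 * (p : ℝ) + 310))) * ((1 + u ^ 2) ^ ((2 : ℝ) - ((19 + p : ℕ) : ℝ)) * u ^ (26 + p)) + ((ε ^ 12 * ((3 * (p : ℝ) + 109) / 2)) * ((1 + u ^ 2) ^ ((2 : ℝ) - ((19 + p : ℕ) : ℝ)) * u ^ (28 + p)) + ((ε ^ 14 * (-((p : ℝ) + 43) / 10)) * ((1 + u ^ 2) ^ ((2 : ℝ) - ((19 + p : ℕ) : ℝ)) * u ^ (30 + p)) + (ε ^ 16 * (((p : ℝ) + 51) / 400)) * ((1 + u ^ 2) ^ ((2 : ℝ) - ((19 + p : ℕ) : ℝ)) * u ^ (32 + p)))))) (Set.Ioi (0:ℝ)) :=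
    K3.add L4
  have L2 : IntegrableOn (fun u : ℝ => ((ε ^ 8 * ((25 * (p : ℝ) + 675) - (2 * (p : ℝ) + 50) * τ)) * ((1 + u ^ 2) ^ ((2 : ℝ) - ((19 + p : ℕ) : ℝ)) * u ^ (24 + p)) + ((ε ^ 10 * (((p : ℝ) + 27) / 10 * τ - (10 * (p : ℝ) + 310))) * ((1 + u ^ 2) ^ ((2 : ℝ) - ((19 + p : ℕ) : ℝ)) * u ^ (26 + p)) + ((ε ^ 12 * ((3 * (p : ℝ) + 109) / 2)) * ((1 + u ^ 2) ^ ((2 : ℝ) - ((19 + p : ℕ) : ℝ)) * u ^ (28 + p)) + ((ε ^ 14 * (-((p : ℝ) + 43) / 10)) * ((1 + u ^ 2) ^ ((2 : ℝ) - ((19 + p : ℕ) : ℝ)) * u ^ (30 + p)) + (ε ^ 16 * (((p : ℝ) + 51) / 400)) * ((1 + u ^ 2) ^ ((2 : ℝ) - ((19 + p : ℕ) : ℝ)) * u ^ (32 + p))))))) (Set.Ioi (0:ℝ)) :=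
    K2.add L3
  have L1 : IntegrableOn (fun u : ℝ => ((ε ^ 6 * ((10 * (p : ℝ) + 230) * τ)) * ((1 + u ^ 2) ^ ((2 : ℝ) - ((19 + p : ℕ) : ℝ)) * u ^ (22 + p)) + ((ε ^ 8 * ((25 * (p : ℝ) + 675) - (2 * (p : ℝ) + 50) * τ)) * ((1 + u ^ 2) ^ ((2 : ℝ) - ((19 + p : ℕ) : ℝ)) * u ^ (24 + p)) + ((ε ^ 10 * (((p : ℝ) + 27) / 10 * τ - (10 * (p : ℝ) + 310))) * ((1 + u ^ 2) ^ ((2 : ℝ) - ((19 + p : ℕ) : ℝ)) * u ^ (26 + p)) + ((ε ^ 12 * ((3 * (p : ℝ) + 109) / 2)) * ((1 + u ^ 2) ^ ((2 : ℝ) - ((19 + p : ℕ) : ℝ)) * u ^ (28 + p)) + ((ε ^ 14 * (-((p : ℝ) + 43) / 10)) * ((1 + u ^ 2) ^ ((2 : ℝ) - ((19 + p : ℕ) : ℝ)) * u ^ (30 + p)) + (ε ^ 16 * (((p : ℝ) + 51) / 400)) * ((1 + u ^ 2) ^ ((2 : ℝ) - ((19 + p : ℕ) : ℝ)) * u ^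 (32 + p)))))))) (Set.Ioi (0:ℝ)) :=
    K1.add L2
  rw [integral_add K0 L1,
    integral_add K1 L2,
    integral_add K2 L3,
    integral_add K3 L4,
    integral_add K4 L5,
    integral_add K5 K6]
  simp only [integral_const_mul]
  have hA := rec_aux (19 + p) (20 + p) (by omega) (by omega)
  have hB := rec_aux (19 + p) (22 + p) (by omega) (by omega)
  have hC := rec_aux (19 + p) (24 + p) (by omega) (by omega)
  have hD := rec_aux (19 + p) (26 + p) (by omega) (by omega)
  have hE := rec_aux (19 + p) (28 + p) (by omega) (by omega)
  have hF := rec_aux (19 + p) (30 + p) (by omega) (by omega)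
  rw [show 20 + p + 2 = 22 + p from by omega] at hA
  rw [show 22 + p + 2 = 24 + p from by omega] at hB
  rw [show 24 + p + 2 = 26 + p from by omega] at hC
  rw [show 26 + p + 2 = 28 + p from by omega] at hD
  rw [show 28 + p + 2 = 30 + p from by omega] at hE
  rw [show 30 + p + 2 = 32 + p from by omega] at hF
  set a0 := ∫ u in Set.Ioi (0:ℝ), (1 + u ^ 2) ^ ((2 : ℝ) - ((19 + p : ℕ) : ℝ)) * u ^ (20 + p) with ha0
  set a1 := ∫ u in Set.Ioi (0:ℝ), (1 + u ^ 2) ^ ((2 : ℝ) - ((19 + p : ℕ) : ℝ)) * u ^ (22 + p) with ha1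
  set a2 := ∫ u in Set.Ioi (0:ℝ), (1 + u ^ 2) ^ ((2 : ℝ) - ((19 + p : ℕ) : ℝ)) * u ^ (24 + p) with ha2
  set a3 := ∫ u in Set.Ioi (0:ℝ), (1 + u ^ 2) ^ ((2 : ℝ) - ((19 + p : ℕ) : ℝ)) * u ^ (26 + p) with ha3
  set a4 := ∫ u in Set.Ioi (0:ℝ), (1 + u ^ 2) ^ ((2 : ℝ) - ((19 + p : ℕ) : ℝ)) * u ^ (28 + p) with ha4
  set a5 := ∫ u in Set.Ioi (0:ℝ), (1 + u ^ 2) ^ ((2 : ℝ) - ((19 + p : ℕ) : ℝ)) * u ^ (30 + p) with ha5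
  set a6 := ∫ u in Set.Ioi (0:ℝ), (1 + u ^ 2) ^ ((2 : ℝ) - ((19 + p : ℕ) : ℝ)) * u ^ (32 + p) with ha6
  push_cast at hA hB hC hD hE hF
  have n25 : ((p : ℝ) + 25) ≠ 0 := by positivity
  have n23 : ((p : ℝ) + 23) ≠ 0 := by positivity
  have n5 : ((p : ℝ) + 5) ≠ 0 := by positivity
  have n3 : ((p : ℝ) + 3) ≠ 0 := by positivity
  have n1 : ((p : ℝ) + 1) ≠ 0 := by positivity
  have nD : (400 * ((p:ℝ)+25) * ((p:ℝ)+23) * ((p:ℝ)+5) * ((p:ℝ)+3) * ((p:ℝ)+1)) ≠ 0 := by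
    positivity
  have hI : Ipoly (19 + p) τ (ε ^ 2)
      = ((652050000 : ℝ) * ε ^ 8 + (-1069500000 : ℝ) * ε ^ 10 + (1015335000 : ℝ) * ε ^ 12 + (-774387000 : ℝ) * ε ^ 14 + (711805725 : ℝ) * ε ^ 16 + (86940000 : ℝ) * τ * ε ^ 6 + (-48300000 : ℝ) * τ * ε ^ 8 + (9315000 : ℝ) * τ * ε ^ 10 + (4158000 : ℝ) * τ ^ 2 * ε ^ 4 + (1145460000 : ℝ) * (p:ℝ) * ε ^ 8 + (-1763680000 : ℝ) * (p:ℝ) * ε ^ 10 + (1504088400 : ℝ) * (p:ℝ) * ε ^ 12 + (-912424480 : ℝ) * (p:ℝ) * ε ^ 14 + (147246954 : ℝ) * (p:ℝ) * ε ^ 16 + (159168000 : ℝ) * (p:ℝ) * τ * ε ^ 6 + (-84992000 : ℝ) * (p:ℝ) * τ * ε ^ 8 + (15405600 : ℝ) * (p:ℝ) * τ * ε ^ 10 + (7809600 : ℝ) * (p:ℝ) * τ ^ 2 * ε ^ 4 + (623110000 : ℝ) * (p:ℝ) ^ 2 * ε ^ 8 + (-836236000 : ℝ) * (p:ℝ)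 ^ 2 * ε ^ 10 + (547129000 : ℝ) * (p:ℝ) ^ 2 * ε ^ 12 + (-147787960 : ℝ) * (p:ℝ) ^ 2 * ε ^ 14 + (12569239 : ℝ) * (p:ℝ) ^ 2 * ε ^ 16 + (94156000 : ℝ) * (p:ℝ) ^ 2 * τ * ε ^ 6 + (-46402400 : ℝ) * (p:ℝ) ^ 2 * τ * ε ^ 8 + (7355320 : ℝ) * (p:ℝ) ^ 2 * τ * ε ^ 10 + (4855600 : ℝ) * (p:ℝ) ^ 2 * τ ^ 2 * ε ^ 4 + (144120000 : ℝ) * (p:ℝ) ^ 3 * ε ^ 8 + (-152896000 : ℝ) * (p:ℝ) ^ 3 * ε ^ 10 + (61333600 : ℝ) * (p:ℝ) ^ 3 * ε ^ 12 + (-10091200 : ℝ) * (p:ℝ) ^ 3 * ε ^ 14 + (565980 : ℝ) * (p:ℝ) ^ 3 * ε ^ 16 + (24960000 : ℝ) * (p:ℝ) ^ 3 * τ * ε ^ 6 + (-10803200 : ℝ) * (p:ℝ) ^ 3 * τ * ε ^ 8 + (1364160 : ℝ) * (p:ℝ) ^ 3 * τ * ε ^ 10 + (1392000 : ℝ) *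 (p:ℝ) ^ 3 * τ ^ 2 * ε ^ 4 + (15070000 : ℝ) * (p:ℝ) ^ 4 * ε ^ 8 + (-11188000 : ℝ) * (p:ℝ) ^ 4 * ε ^ 10 + (3026600 : ℝ) * (p:ℝ) ^ 4 * ε ^ 12 + (-346600 : ℝ) * (p:ℝ) ^ 4 * ε ^ 14 + (14155 : ℝ) * (p:ℝ) ^ 4 * ε ^ 16 + (3220000 : ℝ) * (p:ℝ) ^ 4 * τ * ε ^ 6 + (-1143200 : ℝ) * (p:ℝ) ^ 4 * τ * ε ^ 8 + (102760 : ℝ) * (p:ℝ) ^ 4 * τ * ε ^ 10 + (202000 : ℝ) * (p:ℝ) ^ 4 * τ ^ 2 * ε ^ 4 + (660000 : ℝ) * (p:ℝ) ^ 5 * ε ^ 8 + (-352000 : ℝ) * (p:ℝ) ^ 5 * ε ^ 10 + (69200 : ℝ) * (p:ℝ) ^ 5 * ε ^ 12 + (-5920 : ℝ) * (p:ℝ) ^ 5 * ε ^ 14 + (186 : ℝ) * (p:ℝ) ^ 5 * ε ^ 16 + (192000 : ℝ) * (p:ℝ) ^ 5 * τ * ε ^ 6 + (-51200 : ℝ)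 * (p:ℝ) ^ 5 * τ * ε ^ 8 + (3360 : ℝ) * (p:ℝ) ^ 5 * τ * ε ^ 10 + (14400 : ℝ) * (p:ℝ) ^ 5 * τ ^ 2 * ε ^ 4 + (10000 : ℝ) * (p:ℝ) ^ 6 * ε ^ 8 + (-4000 : ℝ) * (p:ℝ) ^ 6 * ε ^ 10 + (600 : ℝ) * (p:ℝ) ^ 6 * ε ^ 12 + (-40 : ℝ) * (p:ℝ) ^ 6 * ε ^ 14 + (1 : ℝ) * (p:ℝ) ^ 6 * ε ^ 16 + (4000 : ℝ) * (p:ℝ) ^ 6 * τ * ε ^ 6 + (-800 : ℝ) * (p:ℝ) ^ 6 * τ * ε ^ 8 + (40 : ℝ) * (p:ℝ) ^ 6 * τ * ε ^ 10 + (400 : ℝ) * (p:ℝ) ^ 6 * τ ^ 2 * ε ^ 4) / (400 * ((p:ℝ)+25) * ((p:ℝ)+23) * ((p:ℝ)+5) * ((p:ℝ)+3) * ((p:ℝ)+1)) := by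
    rw [eq_div_iff nD]
    simp only [Ipoly]
    push_cast
    rw [show (19:ℝ) + (p:ℝ) + 6 = (p:ℝ) + 25 from by ring,
      show (19:ℝ) + (p:ℝ) + 4 = (p:ℝ) + 23 from by ring,
      show (19:ℝ) + (p:ℝ) - 14 = (p:ℝ) + 5 from by ring,
      show (19:ℝ) + (p:ℝ) - 16 = (p:ℝ) + 3 from by ring,
      show (19:ℝ) + (p:ℝ) - 18 = (p:ℝ) + 1 from by ring]
    field_simp
    ring
  rw [hI, div_mul_eq_mul_div _
    (400 * ((p:ℝ)+25) * ((p:ℝ)+23) * ((p:ℝ)+5) * ((p:ℝ)+3) * ((p:ℝ)+1)) a3, eq_div_iff nD]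
  linear_combination ((-3450000 : ℝ) * τ ^ 2 * ε ^ 4 + (-5578000 : ℝ) * (p:ℝ) * τ ^ 2 * ε ^ 4 + (-2517600 : ℝ) * (p:ℝ) ^ 2 * τ ^ 2 * ε ^ 4 + (-412000 : ℝ) * (p:ℝ) ^ 3 * τ ^ 2 * ε ^ 4 + (-22800 : ℝ) * (p:ℝ) ^ 4 * τ ^ 2 * ε ^ 4 + (-400 : ℝ) * (p:ℝ) ^ 5 * τ ^ 2 * ε ^ 4) * hA + ((-34500000 : ℝ) * τ * ε ^ 6 + (-1650000 : ℝ) * τ ^ 2 * ε ^ 4 + (-55780000 : ℝ) * (p:ℝ) * τ * ε ^ 6 + (-2746000 : ℝ) * (p:ℝ) * τ ^ 2 * ε ^ 4 + (-25176000 : ℝ) * (p:ℝ) ^ 2 * τ * ε ^ 6 + (-1327200 : ℝ) * (p:ℝ) ^ 2 * τ ^ 2 * ε ^ 4 + (-4120000 : ℝ) * (p:ℝ) ^ 3 * τ * ε ^ 6 + (-248800 : ℝ) * (p:ℝ) ^ 3 * τ ^ 2 * ε ^ 4 + (-228000 : ℝ) * (p:ℝ) ^ 4 * τ * ε ^ 6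 + (-18000 : ℝ) * (p:ℝ) ^ 4 * τ ^ 2 * ε ^ 4 + (-4000 : ℝ) * (p:ℝ) ^ 5 * τ * ε ^ 6 + (-400 : ℝ) * (p:ℝ) ^ 5 * τ ^ 2 * ε ^ 4) * hB + ((-93150000 : ℝ) * ε ^ 8 + (-12420000 : ℝ) * τ * ε ^ 6 + (6900000 : ℝ) * τ * ε ^ 8 + (-594000 : ℝ) * τ ^ 2 * ε ^ 4 + (-150330000 : ℝ) * (p:ℝ) * ε ^ 8 + (-20964000 : ℝ) * (p:ℝ) * τ * ε ^ 6 + (11156000 : ℝ) * (p:ℝ) * τ * ε ^ 8 + (-1030800 : ℝ) * (p:ℝ) * τ ^ 2 * ε ^ 4 + (-67540000 : ℝ) * (p:ℝ) ^ 2 * ε ^ 8 + (-10456000 : ℝ) * (p:ℝ) ^ 2 * τ * ε ^ 6 + (5035200 : ℝ) * (p:ℝ) ^ 2 * τ * ε ^ 8 + (-546400 : ℝ) * (p:ℝ) ^ 2 * τ ^ 2 * ε ^ 4 + (-10940000 : ℝ) * (p:ℝ) ^ 3 * ε ^ 8 + (-2072000 : ℝ) * (p:ℝ) ^ 3 * τ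 * ε ^ 6 + (824000 : ℝ) * (p:ℝ) ^ 3 * τ * ε ^ 8 + (-120800 : ℝ) * (p:ℝ) ^ 3 * τ ^ 2 * ε ^ 4 + (-590000 : ℝ) * (p:ℝ) ^ 4 * ε ^ 8 + (-164000 : ℝ) * (p:ℝ) ^ 4 * τ * ε ^ 6 + (45600 : ℝ) * (p:ℝ) ^ 4 * τ * ε ^ 8 + (-11600 : ℝ) * (p:ℝ) ^ 4 * τ ^ 2 * ε ^ 4 + (-10000 : ℝ) * (p:ℝ) ^ 5 * ε ^ 8 + (-4000 : ℝ) * (p:ℝ) ^ 5 * τ * ε ^ 6 + (800 : ℝ) * (p:ℝ) ^ 5 * τ * ε ^ 8 + (-400 : ℝ) * (p:ℝ) ^ 5 * τ ^ 2 * ε ^ 4) * hC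
    + ((37605000 : ℝ) * ε ^ 12 + (-28681000 : ℝ) * ε ^ 14 + (26363175 : ℝ) * ε ^ 16 + (54314200 : ℝ) * (p:ℝ) * ε ^ 12 + (-32731240 : ℝ) * (p:ℝ) * ε ^ 14 + (4477177 : ℝ) * (p:ℝ) * ε ^ 16 + (18252400 : ℝ) * (p:ℝ) ^ 2 * ε ^ 12 + (-4261360 : ℝ) * (p:ℝ) ^ 2 * ε ^ 14 + (299706 : ℝ) * (p:ℝ) ^ 2 * ε ^ 16 + (1595600 : ℝ) * (p:ℝ) ^ 3 * ε ^ 12 + (-215920 : ℝ) * (p:ℝ) ^ 3 * ε ^ 14 + (9862 : ℝ) * (p:ℝ) ^ 3 * ε ^ 16 + (53000 : ℝ) * (p:ℝ) ^ 4 * ε ^ 12 + (-4840 : ℝ) * (p:ℝ) ^ 4 * ε ^ 14 + (159 : ℝ) * (p:ℝ) ^ 4 * ε ^ 16 + (600 : ℝ) * (p:ℝ) ^ 5 * ε ^ 12 + (-40 : ℝ) * (p:ℝ) ^ 5 * ε ^ 14 + (1 : ℝ) * (p:ℝ) ^ 5 * ε ^ 16) * hD + ((-4945000 : ℝ) * ε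 ^ 14 + (4545375 : ℝ) * ε ^ 16 + (-6461800 : ℝ) * (p:ℝ) * ε ^ 14 + (1524265 : ℝ) * (p:ℝ) * ε ^ 16 + (-1640560 : ℝ) * (p:ℝ) ^ 2 * ε ^ 14 + (153498 : ℝ) * (p:ℝ) ^ 2 * ε ^ 16 + (-127600 : ℝ) * (p:ℝ) ^ 3 * ε ^ 14 + (6742 : ℝ) * (p:ℝ) ^ 3 * ε ^ 16 + (-3880 : ℝ) * (p:ℝ) ^ 4 * ε ^ 14 + (135 : ℝ) * (p:ℝ) ^ 4 * ε ^ 16 + (-40 : ℝ) * (p:ℝ) ^ 5 * ε ^ 14 + (1 : ℝ) * (p:ℝ) ^ 5 * ε ^ 16) * hE + ((439875 : ℝ) * ε ^ 16 + (279945 : ℝ) * (p:ℝ) * ε ^ 16 + (54994 : ℝ) * (p:ℝ) ^ 2 * ε ^ 16 + (3830 : ℝ) * (p:ℝ) ^ 3 * ε ^ 16 + (107 : ℝ) * (p:ℝ) ^ 4 * ε ^ 16 + (1 : ℝ) * (p:ℝ) ^ 5 * ε ^ 16) * hF
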